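/- For all real numbers r, ε and τ, the average over θ ∈ [0, 2π] of the function ε r sin²θ (1 − r² cos²θ) + (τ²/12) · r · ( −3 sinθ cosθ − 4 r² ε² sin³θ cosθ (r² cos²θ − 1) + r² ε sin⁴θ + ε cos²θ (r² cos²θ − 1) + ε sin²θ (1 − 9 r² cos²θ) ) equals −(1/32) · r · ε · ( r²(τ² + 4) − 16 ). That is, (1/(2π)) ∫₀^{2π} [that integrand] dθ = −(1/32) r ε ( r²(τ²+4) − 16 ). -/

import Mathlib

lemma hF1 (x : ℝ) : HasDerivAt (fun x : ℝ => x/2 - Real.sin x * Real.cos x/2) (Real.sin x ^ 2) x := by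
  have hp := Real.sin_sq_add_cos_sq x
  have h := ((hasDerivAt_id x).div_const 2).sub
    (((Real.hasDerivAt_sin x).mul (Real.hasDerivAt_cos x)).div_const 2)
  refine h.congr_deriv ?_
  symm
  linear_combination hp / 2

lemma hF2 (x : ℝ) : HasDerivAt
    (fun x : ℝ => x/8 - Real.sin x * Real.cos x * (Real.cos x ^ 2 - Real.sin x ^ 2)/8)
    (Real.sin x ^ 2 * Real.cos x ^ 2) x := by
  have hp := Real.sin_sq_add_cos_sq x
  have h := ((hasDerivAt_id x).div_const 8).sub
    ((((Real.hasDerivAt_sin x).mul (Real.hasDerivAt_cos x)).mul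
      (((Real.hasDerivAt_cos x).pow 2).sub ((Real.hasDerivAt_sin x).pow 2))).div_const 8)
  refine h.congr_deriv ?_
  symm
  simp only [Pi.pow_apply, Pi.mul_apply, Pi.sub_apply]
  linear_combination ((Real.sin x ^ 2 + Real.cos x ^ 2 + 1)/8) * hp

lemma hF3 (x : ℝ) : HasDerivAt (fun x : ℝ => Real.sin x ^ 2 / 2) (Real.sin x * Real.cos x) x := by
  have h := ((Real.hasDerivAt_sin x).pow 2).div_const 2
  refine h.congr_deriv ?_
  symm
  ring

lemma hF4 (x : ℝ) : HasDerivAt (fun x : ℝ => Real.sin x ^ 4 / 4) (Real.sin x ^ 3 * Real.cos x) x := by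
  have h := ((Real.hasDerivAt_sin x).pow 4).div_const 4
  refine h.congr_deriv ?_
  symm
  ring

lemma hF5 (x : ℝ) : HasDerivAt (fun x : ℝ => Real.sin x ^ 4 / 4 - Real.sin x ^ 6 / 6)
    (Real.sin x ^ 3 * Real.cos x ^ 3) x := by
  have hp := Real.sin_sq_add_cos_sq x
  have h := (((Real.hasDerivAt_sin x).pow 4).div_const 4).sub
    (((Real.hasDerivAt_sin x).pow 6).div_const 6)
  refine h.congr_deriv ?_
  symm
  linear_combination (Real.sin x ^ 3 * Real.cos x) * hp

lemma hF6 (x : ℝ) : HasDerivAt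
    (fun x : ℝ => 3*x/8 - Real.sin x ^ 3 * Real.cos x/4 - 3*(Real.sin x * Real.cos x)/8)
    (Real.sin x ^ 4) x := by
  have hp := Real.sin_sq_add_cos_sq x
  have h := ((((hasDerivAt_id x).const_mul 3).div_const 8).sub
    ((((Real.hasDerivAt_sin x).pow 3).mul (Real.hasDerivAt_cos x)).div_const 4)).sub
    ((((Real.hasDerivAt_sin x).mul (Real.hasDerivAt_cos x)).const_mul 3).div_const 8)
  refine h.congr_deriv ?_
  symm
  simp only [Pi.pow_apply, Pi.mul_apply, Pi.sub_apply]
  linear_combination (3*Real.sin x ^ 2/4 + 3/8) * hp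

lemma hF7 (x : ℝ) : HasDerivAt
    (fun x : ℝ => 3*x/8 + Real.cos x ^ 3 * Real.sin x/4 + 3*(Real.sin x * Real.cos x)/8)
    (Real.cos x ^ 4) x := by
  have hp := Real.sin_sq_add_cos_sq x
  have h := ((((hasDerivAt_id x).const_mul 3).div_const 8).add
    ((((Real.hasDerivAt_cos x).pow 3).mul (Real.hasDerivAt_sin x)).div_const 4)).add
    ((((Real.hasDerivAt_sin x).mul (Real.hasDerivAt_cos x)).const_mul 3).div_const 8)
  refine h.congr_deriv ?_
  symm
  simp only [Pi.pow_apply, Pi.mul_apply, Pi.sub_apply]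
  linear_combination (3*Real.cos x ^ 2/4 + 3/8) * hp

lemma hF8 (x : ℝ) : HasDerivAt (fun x : ℝ => x/2 + Real.sin x * Real.cos x/2)
    (Real.cos x ^ 2) x := by
  have hp := Real.sin_sq_add_cos_sq x
  have h := ((hasDerivAt_id x).div_const 2).add
    (((Real.hasDerivAt_sin x).mul (Real.hasDerivAt_cos x)).div_const 2)
  refine h.congr_deriv ?_
  symm
  linear_combination hp / 2

/-- the average over θ ∈ [0,2π] of the order-τ² modified radial velocity of
the S₂(τ)(CBABC) integrator for the van der Pol oscillator equals
−(1/32) r ε (r²(τ²+4) − 16). -/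
theorem vdp_modified_averaged_radial_equation
    (r ε τ : ℝ) :
    (1 / (2 * Real.pi)) *
        (∫ θ in (0 : ℝ)..(2 * Real.pi),
          ε * r * Real.sin θ ^ 2 * (1 - r ^ 2 * Real.cos θ ^ 2)
            + (τ ^ 2 / 12) * r *
              (-3 * Real.sin θ * Real.cos θ
                - 4 * r ^ 2 * ε ^ 2 * Real.sin θ ^ 3 * Real.cos θ *
                    (r ^ 2 * Real.cos θ ^ 2 - 1)
                + r ^ 2 * ε * Real.sin θ ^ 4
                + ε * Real.cos θ ^ 2 * (r ^ 2 * Real.cos θ ^ 2 - 1)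
                + ε * Real.sin θ ^ 2 * (1 - 9 * r ^ 2 * Real.cos θ ^ 2)))
      = -(1 / 32) * r * ε * (r ^ 2 * (τ ^ 2 + 4) - 16) := by
  have key : ∀ x ∈ Set.uIcc (0:ℝ) (2*Real.pi), HasDerivAt
      (fun x : ℝ => ε*r*((x/2 - Real.sin x * Real.cos x/2)
          - r^2*(x/8 - Real.sin x * Real.cos x * (Real.cos x ^ 2 - Real.sin x ^ 2)/8))
        + (τ^2/12)*r*((-3)*(Real.sin x ^ 2/2)
          + (-(4*r^2*ε^2))*(r^2*(Real.sin x ^ 4/4 - Real.sin x ^ 6/6) - Real.sin x ^ 4/4)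
          + (r^2*ε)*(3*x/8 - Real.sin x ^ 3 * Real.cos x/4 - 3*(Real.sin x * Real.cos x)/8)
          + ε*(r^2*(3*x/8 + Real.cos x ^ 3 * Real.sin x/4 + 3*(Real.sin x * Real.cos x)/8)
              - (x/2 + Real.sin x * Real.cos x/2))
          + ε*((x/2 - Real.sin x * Real.cos x/2)
              - 9*r^2*(x/8 - Real.sin x * Real.cos x * (Real.cos x ^ 2 - Real.sin x ^ 2)/8))))
      (ε * r * Real.sin x ^ 2 * (1 - r ^ 2 * Real.cos x ^ 2)
            + (τ ^ 2 / 12) * r *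
              (-3 * Real.sin x * Real.cos x
                - 4 * r ^ 2 * ε ^ 2 * Real.sin x ^ 3 * Real.cos x *
                    (r ^ 2 * Real.cos x ^ 2 - 1)
                + r ^ 2 * ε * Real.sin x ^ 4
                + ε * Real.cos x ^ 2 * (r ^ 2 * Real.cos x ^ 2 - 1)
                + ε * Real.sin x ^ 2 * (1 - 9 * r ^ 2 * Real.cos x ^ 2))) x := by
    intro x _
    have t0 := ((hF1 x).sub ((hF2 x).const_mul (r^2))).const_mul (ε*r)
    have t1 := (hF3 x).const_mul (-3 : ℝ)
    have t2 := (((hF5 x).const_mul (r^2)).sub (hF4 x)).const_mul (-(4*r^2*ε^2))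
    have t3 := (hF6 x).const_mul (r^2*ε)
    have t4 := (((hF7 x).const_mul (r^2)).sub (hF8 x)).const_mul ε
    have t5 := ((hF1 x).sub ((hF2 x).const_mul (9*r^2))).const_mul ε
    have h := t0.add (((((t1.add t2).add t3).add t4).add t5).const_mul ((τ^2/12)*r))
    refine h.congr_deriv ?_
    symm
    ring
  have hcont : IntervalIntegrable (fun θ : ℝ =>
      ε * r * Real.sin θ ^ 2 * (1 - r ^ 2 * Real.cos θ ^ 2)
            + (τ ^ 2 / 12) * r *
              (-3 * Real.sin θ * Real.cos θ
                - 4 * r ^ 2 * ε ^ 2 * Real.sin θ ^ 3 * Real.cos θ *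
                    (r ^ 2 * Real.cos θ ^ 2 - 1)
                + r ^ 2 * ε * Real.sin θ ^ 4
                + ε * Real.cos θ ^ 2 * (r ^ 2 * Real.cos θ ^ 2 - 1)
                + ε * Real.sin θ ^ 2 * (1 - 9 * r ^ 2 * Real.cos θ ^ 2)))
      MeasureTheory.volume 0 (2*Real.pi) := by
    apply Continuous.intervalIntegrable
    fun_prop
  rw [intervalIntegral.integral_eq_sub_of_hasDerivAt key hcont]
  simp [Real.sin_two_pi, Real.cos_two_pi]
  have hπ : Real.pi ≠ 0 := Real.pi_ne_zero
  field_simp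
  ring
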